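/- Gao's Quantum Union Bound: with the sequential measurement setup, if Loss = Σ_t ε_t ≤ 1 then Fail ≤ 4·Loss/(1+Loss)² ≤ 4·Loss. -/

import Mathlib

open Matrix ComplexOrder

/-- The positive semidefinite square root of a positive semidefinite matrix (the definition
`Matrix.PosSemidef.sqrt` of the older Mathlib, which has since been removed). -/
noncomputable def Matrix.PosSemidef.sqrt {n 𝕜 : Type*} [Fintype n] [RCLike 𝕜] [DecidableEq n]
    {A : Matrix n n 𝕜} (hA : A.PosSemidef) : Matrix n n 𝕜 :=
  hA.1.eigenvectorUnitary.1 * diagonal ((↑) ∘ (√·) ∘ hA.1.eigenvalues) *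
  (star hA.1.eigenvectorUnitary : Matrix n n 𝕜)

/-- The Schatten 1-norm (trace norm): ‖M‖₁ = tr √(MᴴM). -/
noncomputable def traceNorm {n m : Type*} [Fintype n] [Fintype m] [DecidableEq m]
    (M : Matrix n m ℂ) : ℝ :=
  ((Matrix.posSemidef_conjTranspose_mul_self M).sqrt.trace).re

lemma gao_sqrt_conjTranspose {n 𝕜 : Type*} [Fintype n] [RCLike 𝕜] [DecidableEq n]
    {A : Matrix n n 𝕜} (hA : A.PosSemidef) : (hA.sqrt)ᴴ = hA.sqrt := by
  unfold Matrix.PosSemidef.sqrt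
  rw [conjTranspose_mul, conjTranspose_mul, diagonal_conjTranspose, Matrix.mul_assoc]
  have hd : star (((↑) ∘ (√·) ∘ hA.1.eigenvalues) : n → 𝕜) = (↑) ∘ (√·) ∘ hA.1.eigenvalues := by
    funext i
    simp [RCLike.star_def]
  rw [hd]
  simp only [← Matrix.star_eq_conjTranspose, star_star]

lemma gao_sqrt_mul_self {n 𝕜 : Type*} [Fintype n] [RCLike 𝕜] [DecidableEq n]
    {A : Matrix n n 𝕜} (hA : A.PosSemidef) : hA.sqrt * hA.sqrt = A := by
  unfold Matrix.PosSemidef.sqrt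
  set U := hA.1.eigenvectorUnitary
  have hU : (star U : Matrix n n 𝕜) * U.1 = 1 := Unitary.coe_star_mul_self U
  rw [show U.1 * diagonal ((↑) ∘ (√·) ∘ hA.1.eigenvalues) * (star U : Matrix n n 𝕜) *
      (U.1 * diagonal ((↑) ∘ (√·) ∘ hA.1.eigenvalues) * (star U : Matrix n n 𝕜))
      = U.1 * diagonal ((↑) ∘ (√·) ∘ hA.1.eigenvalues) * ((star U : Matrix n n 𝕜) * U.1) *
        diagonal ((↑) ∘ (√·) ∘ hA.1.eigenvalues) * (star U : Matrix n n 𝕜) by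
      simp only [Matrix.mul_assoc], hU, Matrix.mul_one, Matrix.mul_assoc U.1, diagonal_mul_diagonal]
  conv_rhs => rw [hA.1.spectral_theorem, Unitary.conjStarAlgAut_apply]
  congr 3
  funext i
  simp only [Function.comp_apply, ← RCLike.ofReal_mul, Real.mul_self_sqrt (hA.eigenvalues_nonneg i)]

section GaoAux

variable {d : ℕ}
local notation "M" => Matrix (Fin d) (Fin d) ℂ

noncomputable def gaoIp (X Y : M) : ℝ := ((Xᴴ * Y).trace).re

local notation "ip" => gaoIp

lemma gao_ip_nonneg (X : M) : 0 ≤ ip X X := by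
  have h : (Xᴴ * X).trace = ∑ i, ∑ j, star (X j i) * X j i := by
    simp [Matrix.trace, Matrix.mul_apply, Matrix.conjTranspose_apply, Matrix.diag]
  rw [gaoIp, h, Complex.re_sum]
  refine Finset.sum_nonneg fun i _ => ?_
  rw [Complex.re_sum]
  refine Finset.sum_nonneg fun j _ => ?_
  simp only [Complex.star_def, ← Complex.normSq_eq_conj_mul_self]
  simpa using Complex.normSq_nonneg (X j i)

lemma gao_ip_symm (X Y : M) : ip X Y = ip Y X := by
  have h : Yᴴ * X = (Xᴴ * Y)ᴴ := by simp
  rw [gaoIp, gaoIp, h, Matrix.trace_conjTranspose]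
  simp [Complex.star_def]

lemma gao_ip_sub_right (X Y Z : M) : ip X (Y - Z) = ip X Y - ip X Z := by
  simp [gaoIp, Matrix.mul_sub, Complex.sub_re]

lemma gao_ip_smul_right (c : ℝ) (X Y : M) : ip X ((c:ℂ) • Y) = c * ip X Y := by
  simp [gaoIp, Matrix.mul_smul, Complex.mul_re]

lemma gao_ip_sub_left (X Y Z : M) : ip (Y - Z) X = ip Y X - ip Z X := by
  rw [gao_ip_symm, gao_ip_sub_right, gao_ip_symm X Y, gao_ip_symm X Z]

lemma gao_ip_smul_left (c : ℝ) (X Y : M) : ip ((c:ℂ) • Y) X = c * ip Y X := by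
  rw [gao_ip_symm, gao_ip_smul_right, gao_ip_symm]

lemma gao_ip_expand (c : ℝ) (X Y : M) :
    ip (X - (c:ℂ) • Y) (X - (c:ℂ) • Y)
      = ip X X - 2*c*(ip Y X) + c^2 * ip Y Y := by
  rw [gao_ip_sub_right, gao_ip_sub_left, gao_ip_sub_left, gao_ip_smul_right,
    gao_ip_smul_left, gao_ip_smul_left, gao_ip_smul_right, gao_ip_symm X Y]
  ring

lemma gao_two_ip_le (a b : M) (c : ℝ) (hc : 0 < c) :
    2 * ip a b ≤ (1/c) * ip a a + c * ip b b := by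
  have h := gao_ip_nonneg (b - ((1/c : ℝ):ℂ) • a)
  rw [gao_ip_expand] at h
  have key : c * (ip b b - 2 * (1 / c) * ip a b + (1 / c) ^ 2 * ip a a)
      = c * ip b b - 2 * ip a b + (1/c) * ip a a := by
    field_simp
  have h' := mul_nonneg hc.le h
  rw [key] at h'
  linarith

lemma gao_ip_le_sqrt (v x : M) (hv : ip v v = 1) : ip v x ≤ Real.sqrt (ip x x) := by
  have h := gao_ip_nonneg (x - ((ip v x : ℝ):ℂ) • v)
  rw [gao_ip_expand, hv] at h
  have h2 : (ip v x)^2 ≤ ip x x := by nlinarith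
  calc ip v x ≤ |ip v x| := le_abs_self _
    _ = Real.sqrt ((ip v x)^2) := (Real.sqrt_sq_eq_abs _).symm
    _ ≤ Real.sqrt (ip x x) := Real.sqrt_le_sqrt h2

lemma gao_step_norm (B x : M) (hB : Bᴴ = B) (hBB : B * B = B) :
    ip (B*x) (B*x) = ip x x - ip ((1-B)*x) ((1-B)*x) := by
  have h1 : (B*x)ᴴ*(B*x) = xᴴ*(B*x) := by
    rw [conjTranspose_mul, hB, Matrix.mul_assoc, ← Matrix.mul_assoc B B x, hBB]
  have hB' : (1-B)ᴴ = 1-B := by simp [hB]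
  have hBB' : (1-B)*(1-B) = 1-B := by
    simp [Matrix.sub_mul, Matrix.mul_sub, hBB]
  have h2 : ((1-B)*x)ᴴ*((1-B)*x) = xᴴ*((1-B)*x) := by
    rw [conjTranspose_mul, hB', Matrix.mul_assoc, ← Matrix.mul_assoc (1-B) (1-B) x, hBB']
  have h3 : xᴴ*(B*x) + xᴴ*((1-B)*x) = xᴴ*x := by
    rw [← Matrix.mul_add, ← Matrix.add_mul]
    simp
  have h4 : ip (B*x) (B*x) + ip ((1-B)*x) ((1-B)*x) = ip x x := by
    rw [gaoIp, gaoIp, gaoIp, h1, h2, ← Complex.add_re, ← Matrix.trace_add, h3]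
  linarith

lemma gao_step_ip (B v x : M) (hB : Bᴴ = B) (hBB : B * B = B) :
    ip v (B*x) = ip v x - ip ((1-B)*v) ((1-B)*x) := by
  have hB' : (1-B)ᴴ = 1-B := by simp [hB]
  have hBB' : (1-B)*(1-B) = 1-B := by
    simp [Matrix.sub_mul, Matrix.mul_sub, hBB]
  have h2 : ((1-B)*v)ᴴ*((1-B)*x) = vᴴ*((1-B)*x) := by
    rw [conjTranspose_mul, hB', Matrix.mul_assoc, ← Matrix.mul_assoc (1-B) (1-B) x, hBB']
  have h3 : vᴴ*(B*x) + vᴴ*((1-B)*x) = vᴴ*x := by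
    rw [← Matrix.mul_add, ← Matrix.add_mul]
    simp
  have h4 : ip v (B*x) + ip ((1-B)*v) ((1-B)*x) = ip v x := by
    rw [gaoIp, gaoIp, gaoIp, h2, ← Complex.add_re, ← Matrix.trace_add, h3]
  linarith

end GaoAux

lemma gao_arith (L s : ℝ) (hL0 : 0 ≤ L) (hL1 : L ≤ 1) (hs0 : 0 ≤ s) (hs1 : s ≤ 1)
    (key2 : 2 * ((1+L)/2) - ((1+L)/2)^2 - L ≤ ((1+L)/2) * (2*s - ((1+L)/2) * s^2)) :
    1 - s^2 ≤ 4*L/(1+L)^2 := by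
  have hu : (0:ℝ) < 1 + L := by linarith
  have key3 : ((1 + L) * s - 2) ^ 2 ≤ (1 + L) ^ 2 := by nlinarith [key2]
  have key4 : 1 - L ≤ (1 + L) * s := by
    have f1 : 0 < (1 + L) - (1 + L) * s + 2 := by
      nlinarith [mul_le_mul_of_nonneg_left hs1 hu.le]
    have f2 : 0 ≤ ((1 + L) - (1 + L) * s + 2) * ((1 + L) + (1 + L) * s - 2) := by
      nlinarith [key3]
    nlinarith [f1, f2]
  rw [le_div_iff₀ (by positivity)]
  have g1 : (1 - L) ^ 2 ≤ ((1 + L) * s) ^ 2 := pow_le_pow_left₀ (by linarith) key4 2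
  nlinarith [g1]

/-- Gao'\''s Quantum Union Bound: Fail ≤ 4·Loss/(1+Loss)² ≤ 4·Loss. -/
theorem gao_quantum_union_bound
    {d m : ℕ} (ρ : Matrix (Fin d) (Fin d) ℂ)
    (hρ : ρ.PosSemidef) (hρ1 : ρ.trace = 1)
    (A : Fin m → Matrix (Fin d) (Fin d) ℂ)
    (hAherm : ∀ t, (A t).IsHermitian) (hAproj : ∀ t, A t * A t = A t)
    (ε : Fin m → ℝ) (hε : ∀ t, ε t = ((ρ * (1 - A t)).trace).re)
    (ρseq : Fin (m + 1) → Matrix (Fin d) (Fin d) ℂ)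
    (h0 : ρseq 0 = ρ)
    (hprob : ∀ t : Fin m, 0 < ((ρseq t.castSucc * A t).trace).re)
    (hrec : ∀ t : Fin m, ρseq t.succ =
      ((ρseq t.castSucc * A t).trace)⁻¹ • (A t * ρseq t.castSucc * A t))
    (Succ Fail Loss : ℝ)
    (hSucc : Succ = ((((List.ofFn A).reverse.prod) * ρ * ((List.ofFn A).reverse.prod)ᴴ).trace).re)
    (hFail : Fail = 1 - Succ)
    (hLoss : Loss = ∑ t, ε t)
    (hL1 : Loss ≤ 1) :
    Fail ≤ 4 * Loss / (1 + Loss) ^ 2 ∧ 4 * Loss / (1 + Loss) ^ 2 ≤ 4 * Loss := by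
  classical
  set v : Matrix (Fin d) (Fin d) ℂ := hρ.sqrt with hvdef
  have hvH : vᴴ = v := gao_sqrt_conjTranspose hρ
  have hvv : v * v = ρ := gao_sqrt_mul_self hρ
  -- extended projector family
  set A' : ℕ → Matrix (Fin d) (Fin d) ℂ :=
    fun n => if h : n < m then A ⟨n, h⟩ else 1 with hA'def
  have hA'H : ∀ n, (A' n)ᴴ = A' n := by
    intro n
    by_cases h : n < m
    · simp [hA'def, h, (hAherm ⟨n, h⟩).eq]
    · simp [hA'def, h]
  have hA'P : ∀ n, A' n * A' n = A' n := by
    intro n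
    by_cases h : n < m
    · simp [hA'def, h, hAproj ⟨n, h⟩]
    · simp [hA'def, h]
  -- partial products
  set Pp : ℕ → Matrix (Fin d) (Fin d) ℂ :=
    fun n => ((List.ofFn A).take n).reverse.prod with hPpdef
  have hPp0 : Pp 0 = 1 := by simp [hPpdef]
  have hPpm : Pp m = (List.ofFn A).reverse.prod := by
    show (List.take m (List.ofFn A)).reverse.prod = _
    rw [List.take_of_length_le (by simp)]
  have hPps : ∀ n, Pp (n+1) = A' n * Pp n := by
    intro n
    by_cases h : n < m
    · have hg : (List.ofFn A)[n]? = some (A ⟨n, h⟩) := by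
        rw [List.getElem?_eq_getElem (by simpa using h)]
        simp
      simp only [hPpdef, List.take_succ, hg]
      simp [hA'def, h]
    · have hg : (List.ofFn A)[n]? = none := by
        rw [List.getElem?_eq_none]
        simpa using Nat.le_of_not_lt h
      simp only [hPpdef, List.take_succ, hg]
      simp [hA'def, h]
  set x : ℕ → Matrix (Fin d) (Fin d) ℂ := fun n => Pp n * v with hxdef
  have hx0 : x 0 = v := by simp [hxdef, hPp0]
  have hxs : ∀ n, x (n+1) = A' n * x n := by
    intro n
    simp [hxdef, hPps n, Matrix.mul_assoc]
  have hNv : gaoIp v v = 1 := by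
    rw [gaoIp, hvH, hvv, hρ1]
    simp
  -- epsilon
  set ε' : ℕ → ℝ := fun n => gaoIp ((1 - A' n) * v) ((1 - A' n) * v) with hε'def
  have hε'nonneg : ∀ n, 0 ≤ ε' n := fun n => gao_ip_nonneg _
  have hεε : ∀ t : Fin m, ε t = ε' (t : ℕ) := by
    intro t
    have hAt : A' (t : ℕ) = A t := by simp [hA'def, t.isLt]
    have hB' : (1 - A t)ᴴ = 1 - A t := by simp [(hAherm t).eq]
    have hBB' : (1 - A t) * (1 - A t) = 1 - A t := by
      simp [Matrix.sub_mul, Matrix.mul_sub, hAproj t]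
    have h2 : ((1 - A t) * v)ᴴ * ((1 - A t) * v) = vᴴ * ((1 - A t) * v) := by
      rw [conjTranspose_mul, hB', Matrix.mul_assoc,
        ← Matrix.mul_assoc (1 - A t) (1 - A t) v, hBB']
    have h3 : vᴴ * ((1 - A t) * v) = v * (1 - A t) * v := by
      rw [hvH, Matrix.mul_assoc]
    have h4 : (v * (1 - A t) * v).trace = (ρ * (1 - A t)).trace := by
      rw [Matrix.trace_mul_comm, ← Matrix.mul_assoc, hvv]
    rw [hε t, hε'def]
    simp only [hAt]
    rw [gaoIp, h2, h3, h4]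
  have hLoss' : Loss = ∑ t ∈ Finset.range m, ε' t := by
    rw [hLoss]
    rw [Finset.sum_congr rfl (fun t _ => hεε t)]
    exact Fin.sum_univ_eq_sum_range (fun n => ε' n) m
  have hL0 : 0 ≤ Loss := by
    rw [hLoss']
    exact Finset.sum_nonneg fun t _ => hε'nonneg t
  set lam : ℝ := (1 + Loss) / 2 with hlamdef
  have hlam : 0 < lam := by rw [hlamdef]; linarith
  -- norms are bounded by 1
  have hle1 : ∀ n, gaoIp (x n) (x n) ≤ 1 := by
    intro n
    induction n with
    | zero => rw [hx0, hNv]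
    | succ n ih =>
        rw [hxs n, gao_step_norm (A' n) (x n) (hA'H n) (hA'P n)]
        have := gao_ip_nonneg ((1 - A' n) * x n)
        linarith
  -- the invariant
  have Hinv : ∀ n, 2 - lam - (∑ t ∈ Finset.range n, ε' t) / lam
      ≤ 2 * gaoIp v (x n) - lam * gaoIp (x n) (x n) := by
    intro n
    induction n with
    | zero =>
        rw [hx0, hNv]
        simp
    | succ n ih =>
        have hstep1 := gao_step_ip (A' n) v (x n) (hA'H n) (hA'P n)
        have hstep2 := gao_step_norm (A' n) (x n) (hA'H n) (hA'P n)
        have hcs := gao_two_ip_le ((1 - A' n) * v) ((1 - A' n) * x n) lam hlam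
        have hsum : (∑ t ∈ Finset.range (n+1), ε' t)
            = (∑ t ∈ Finset.range n, ε' t) + ε' n := Finset.sum_range_succ _ _
        have hdiv : ((∑ t ∈ Finset.range n, ε' t) + ε' n) / lam
            = (∑ t ∈ Finset.range n, ε' t) / lam + (1/lam) * ε' n := by
          field_simp
        rw [hxs n, hstep1, hstep2, hsum, hdiv]
        have hε'n : ε' n = gaoIp ((1 - A' n) * v) ((1 - A' n) * v) := rfl
        rw [hε'n]
        linarith
  -- connect Succ with ip (x m) (x m)
  have hSuccS : Succ = gaoIp (x m) (x m) := by
    have h1 : x m * (x m)ᴴ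
        = (List.ofFn A).reverse.prod * ρ * ((List.ofFn A).reverse.prod)ᴴ := by
      rw [hxdef]
      simp only [hPpm]
      rw [conjTranspose_mul, hvH, ← hvv]
      rw [Matrix.mul_assoc, Matrix.mul_assoc, Matrix.mul_assoc]
    rw [hSucc, gaoIp, ← h1, Matrix.trace_mul_comm]
  have hS0 : 0 ≤ gaoIp (x m) (x m) := gao_ip_nonneg _
  set s : ℝ := Real.sqrt (gaoIp (x m) (x m)) with hsdef
  have hs0 : 0 ≤ s := Real.sqrt_nonneg _
  have hss : s ^ 2 = gaoIp (x m) (x m) := Real.sq_sqrt hS0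
  have hs1 : s ≤ 1 := Real.sqrt_le_one.mpr (hle1 m)
  have hcs := gao_ip_le_sqrt v (x m) hNv
  have key : 2 - lam - Loss / lam ≤ 2 * s - lam * s ^ 2 := by
    have := Hinv m
    rw [← hLoss'] at this
    rw [hss]
    nlinarith [hcs, this]
  -- clear the division
  have key2 : 2 * lam - lam ^ 2 - Loss ≤ lam * (2 * s - lam * s ^ 2) := by
    have h := mul_le_mul_of_nonneg_left key hlam.le
    have hc : lam * (2 - lam - Loss / lam) = 2 * lam - lam ^ 2 - Loss := by
      field_simp
    rw [hc] at h
    exact h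
  constructor
  · rw [hFail, hSuccS, ← hss]
    rw [hlamdef] at key2
    exact gao_arith Loss s hL0 hL1 hs0 hs1 key2
  · apply div_le_self (by linarith)
    nlinarith
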